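/- For all positive integers i and j with i ≥ j, r_{i, i−j+1} = r_{i−1,i−1} + r_{i−1,i−2} + ⋯ + r_{i−1,i−j}, i.e. r_{i, i−j+1} = ∑_{m=i−j}^{i−1} r_{i−1, m}. -/

import Mathlib

open PowerSeries Finset

/-- The generating function of the Catalan numbers. -/
noncomputable def catalanGF : PowerSeries ℝ :=
  PowerSeries.mk fun n => (catalan n : ℝ)

/-- `r i j` is the coefficient of `x^i` in `(xC(x))^j`, i.e. the `(i,j)` entry of
`D(𝔽^S)⁻¹D`. -/
noncomputable def rEntry (i j : ℕ) : ℝ :=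
  PowerSeries.coeff i ((PowerSeries.X * catalanGF) ^ j)

/-- The Catalan functional equation `C = 1 + x C²`. -/
lemma catalanGF_eq : catalanGF = 1 + X * catalanGF ^ 2 := by
  ext n
  cases n with
  | zero => simp [catalanGF]
  | succ n =>
    rw [map_add, coeff_succ_X_mul, coeff_one, if_neg (Nat.succ_ne_zero n), zero_add,
      pow_two, coeff_mul]
    simp only [catalanGF, coeff_mk]
    rw [catalan_succ']
    push_cast
    rfl

lemma xc_eq : X * catalanGF = X + (X * catalanGF) ^ 2 := by
  nth_rewrite 1 [catalanGF_eq]; ring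

lemma step (i j : ℕ) :
    rEntry (i + 1) (j + 1) = rEntry i j + rEntry (i + 1) (j + 2) := by
  unfold rEntry
  rw [pow_succ]
  nth_rewrite 2 [xc_eq]
  rw [mul_add]
  have h1 : (X * catalanGF) ^ j * X = X * (X * catalanGF) ^ j := by ring
  have h2 : (X * catalanGF) ^ j * (X * catalanGF) ^ 2 = (X * catalanGF) ^ (j + 2) := by
    rw [← pow_add]
  rw [h1, h2, map_add, coeff_succ_X_mul]

lemma vanish (i m : ℕ) (h : i < m) : rEntry i m = 0 := by
  unfold rEntry
  rw [mul_pow, coeff_X_pow_mul', if_neg (by omega)]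

lemma key (a : ℕ) : ∀ k b, b + k = a + 1 → rEntry (a + 1) (b + 1) = ∑ m ∈ Icc b a, rEntry a m := by
  intro k
  induction k with
  | zero =>
    intro b hb
    have : b = a + 1 := by omega
    subst this
    rw [vanish _ _ (by omega), Icc_eq_empty (by omega), sum_empty]
  | succ k ih =>
    intro b hb
    have hba : b ≤ a := by omega
    rw [step, ih (b + 1) (by omega), Finset.Icc_add_one_left_eq_Ioc, Finset.Icc_eq_cons_Ioc hba, sum_cons]

/-- For positive integers `i ≥ j`,
`r_{i,i−j+1} = r_{i−1,i−1} + r_{i−1,i−2} + ⋯ + r_{i−1,i−j}`. -/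
theorem stmt_6 (i j : ℕ) (hj : 1 ≤ j) (hij : j ≤ i) :
    rEntry i (i - j + 1) = ∑ m ∈ Finset.Icc (i - j) (i - 1), rEntry (i - 1) m := by
  obtain ⟨a, rfl⟩ : ∃ a, i = a + 1 := ⟨i - 1, by omega⟩
  have : a + 1 - 1 = a := rfl
  rw [this]
  exact key a j (a + 1 - j) (by omega)
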